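/- arXiv:2412.06189 — 2 statements merged into one kernel-verified Lean document; each statement's English description precedes it below -/
import Mathlib

section
/- For every hypergraph H = (V, E) and every monotone nonnegative set function h on V (in particular, every polymatroid), the minimum over plain elimination orders σ of V of max_{i} h(U_i^σ) equals the minimum over generalized elimination orders σ̄ of V of max_{i} h(U_i^{σ̄}). Consequently, the submodular width of H can equivalently be defined as max over edge-dominated polymatroids h of min over generalized elimination orders σ̄ of max_i h(U_i^{σ̄}). -/
open Finset

/-- A polymatroid on a finite vertex type `V`. -/
def IsPolymatroid {V : Type*} [DecidableEq V] [Fintype V] (h : Finset V → ℝ) : Prop :=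
  h ∅ = 0 ∧ (∀ A : Finset V, 0 ≤ h A) ∧
    (∀ A B : Finset V, A ⊆ B → h A ≤ h B) ∧
    (∀ A B : Finset V, h (A ∪ B) + h (A ∩ B) ≤ h A + h B)

/-- `U(X)`: the union of the hyperedges of `E` intersecting the block `X`. -/
def elimU {V : Type*} [DecidableEq V] (E : Finset (Finset V)) (X : Finset V) :
    Finset V :=
  (E.filter fun e => ¬ Disjoint e X).sup id

/-- Eliminating the block `X`: the hyperedges not intersecting `X`, together
with the new hyperedge `U(X) \ X`. -/
def elimStep {V : Type*} [DecidableEq V] (E : Finset (Finset V)) (X : Finset V) :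
    Finset (Finset V) :=
  insert (elimU E X \ X) (E.filter fun e => Disjoint e X)

/-- The list `U_1, …, U_m` determined by a (generalized) elimination order,
given as a list of blocks. -/
def elimUs {V : Type*} [DecidableEq V] (E : Finset (Finset V)) :
    List (Finset V) → List (Finset V)
  | [] => []
  | X :: σ => elimU E X :: elimUs (elimStep E X) σ

/-- A generalized elimination order: an ordered partition of `V` into
nonempty blocks. -/
def IsGenElimOrder {V : Type*} [DecidableEq V] [Fintype V]
    (σ : List (Finset V)) : Prop :=
  (∀ X ∈ σ, X.Nonempty) ∧ σ.Pairwise Disjoint ∧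
    σ.foldr (· ∪ ·) ∅ = (Finset.univ : Finset V)

namespace GenElimAux

set_option linter.unusedSectionVars false

variable {V : Type*} [DecidableEq V]

def Dominated (E' E : Finset (Finset V)) : Prop := ∀ e ∈ E', ∃ f ∈ E, e ⊆ f

lemma edge_subset_elimU {E : Finset (Finset V)} {e X : Finset V} (he : e ∈ E)
    (hne : ¬ Disjoint e X) : e ⊆ elimU E X :=
  Finset.le_sup (f := id) (Finset.mem_filter.2 ⟨he, hne⟩)

lemma elimU_subset_of_dominated {E' E : Finset (Finset V)} (hd : Dominated E' E)
    (X : Finset V) : elimU E' X ⊆ elimU E X := by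
  show elimU E' X ≤ elimU E X
  apply Finset.sup_le
  intro e he
  rw [Finset.mem_filter] at he
  obtain ⟨f, hf, hef⟩ := hd e he.1
  have hfX : ¬ Disjoint f X := fun h => he.2 (h.mono_left hef)
  exact hef.trans (edge_subset_elimU hf hfX)

noncomputable def refine : List (Finset V) → List (Finset V)
  | [] => []
  | X :: σ => X.toList.map (fun x => ({x} : Finset V)) ++ refine σ

lemma elimUs_append (l1 l2 : List (Finset V)) (E : Finset (Finset V)) :
    elimUs E (l1 ++ l2) = elimUs E l1 ++ elimUs (l1.foldl elimStep E) l2 := by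
  induction l1 generalizing E with
  | nil => rfl
  | cons X l1 ih => simp [elimUs, ih]

lemma foldr_max_nonneg (l : List ℝ) : 0 ≤ l.foldr max 0 := by
  induction l with
  | nil => simp
  | cons a l ih => exact ih.trans (le_max_right _ _)

lemma foldr_max_le {b : ℝ} : ∀ (l : List ℝ) (a : ℝ), a ≤ b → (∀ x ∈ l, x ≤ b) →
    l.foldr max a ≤ b := by
  intro l
  induction l with
  | nil => intro a ha _; exact ha
  | cons c l ih =>
    intro a ha hl
    exact max_le (hl c (by simp)) (ih a ha fun x hx => hl x (by simp [hx]))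

def ElimInv (Eg : Finset (Finset V)) (X : Finset V) (E' : Finset (Finset V))
    (S : Finset V) : Prop :=
  ∀ e ∈ E', Disjoint e S ∧ (e ⊆ elimU Eg X ∨ ∃ f ∈ Eg, e ⊆ f ∧ Disjoint f X)

lemma sing (Eg : Finset (Finset V)) (X : Finset V) :
    ∀ (xs : List V) (E' : Finset (Finset V)) (S : Finset V),
      (∀ x ∈ xs, x ∈ X) → ElimInv Eg X E' S →
      (∀ U ∈ elimUs E' (xs.map fun x => ({x} : Finset V)), U ⊆ elimU Eg X) ∧
      ElimInv Eg X ((xs.map fun x => ({x} : Finset V)).foldl elimStep E')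
        (S ∪ xs.toFinset) := by
  intro xs
  induction xs with
  | nil =>
    intro E' S _ hinv
    refine ⟨by simp [elimUs], ?_⟩
    simpa using hinv
  | cons x xs ih =>
    intro E' S hx hinv
    have hxX : x ∈ X := hx x (by simp)
    -- the new U is contained in elimU Eg X
    have CU : elimU E' {x} ⊆ elimU Eg X := by
      show elimU E' {x} ≤ elimU Eg X
      apply Finset.sup_le
      intro e he
      rw [Finset.mem_filter] at he
      obtain ⟨he1, he2⟩ := he
      rw [Finset.disjoint_singleton_right, not_not] at he2
      rcases (hinv e he1).2 with h | ⟨f, hf, hef, hfX⟩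
      · exact h
      · exact absurd (Finset.disjoint_left.1 (hfX.mono_left hef) he2 hxX) id
    -- invariant is preserved
    have hinv' : ElimInv Eg X (elimStep E' {x}) (insert x S) := by
      intro e he
      rw [elimStep, Finset.mem_insert] at he
      rcases he with rfl | he
      · constructor
        · rw [Finset.disjoint_insert_right]
          refine ⟨by simp, ?_⟩
          rw [Finset.disjoint_left]
          intro a ha haS
          have ha' : a ∈ elimU E' {x} := (Finset.sdiff_subset) ha
          rw [elimU, Finset.mem_sup] at ha'
          obtain ⟨e, he, hae⟩ := ha'
          rw [Finset.mem_filter] at he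
          exact Finset.disjoint_left.1 (hinv e he.1).1 hae haS
        · exact Or.inl ((Finset.sdiff_subset).trans CU)
      · rw [Finset.mem_filter] at he
        obtain ⟨he1, he2⟩ := he
        obtain ⟨hd, hp⟩ := hinv e he1
        refine ⟨?_, hp⟩
        rw [Finset.disjoint_insert_right]
        exact ⟨by rw [Finset.disjoint_singleton_right] at he2; exact he2, hd⟩
    obtain ⟨ih1, ih2⟩ := ih (elimStep E' {x}) (insert x S)
      (fun y hy => hx y (by simp [hy])) hinv'
    constructor
    · intro U hU
      rw [List.map_cons, elimUs] at hU
      rcases List.mem_cons.1 hU with rfl | hU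
      · exact CU
      · exact ih1 U hU
    · have : insert x S ∪ xs.toFinset = S ∪ (x :: xs).toFinset := by
        ext a; simp [or_assoc]
      rw [List.map_cons, List.foldl_cons]
      rwa [this] at ih2

lemma blockStep (Eg : Finset (Finset V)) (X : Finset V) (E' : Finset (Finset V))
    (hd : Dominated E' Eg) :
    (∀ U ∈ elimUs E' (X.toList.map fun x => ({x} : Finset V)), U ⊆ elimU Eg X) ∧
    Dominated ((X.toList.map fun x => ({x} : Finset V)).foldl elimStep E')
      (elimStep Eg X) := by
  have base : ElimInv Eg X E' ∅ := by
    intro e he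
    obtain ⟨f, hf, hef⟩ := hd e he
    refine ⟨Finset.disjoint_empty_right _, ?_⟩
    by_cases hfX : Disjoint f X
    · exact Or.inr ⟨f, hf, hef, hfX⟩
    · exact Or.inl (hef.trans (edge_subset_elimU hf hfX))
  obtain ⟨h1, h2⟩ := sing Eg X X.toList E' ∅ (fun x hx => Finset.mem_toList.1 hx) base
  refine ⟨h1, ?_⟩
  intro e he
  obtain ⟨hdis, hp⟩ := h2 e he
  rw [Finset.empty_union, Finset.toList_toFinset] at hdis
  rcases hp with h | ⟨f, hf, hef, hfX⟩
  · exact ⟨elimU Eg X \ X, Finset.mem_insert_self _ _,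
      Finset.subset_sdiff.2 ⟨h, hdis⟩⟩
  · exact ⟨f, Finset.mem_insert_of_mem (Finset.mem_filter.2 ⟨hf, hfX⟩), hef⟩

lemma main_ineq (h : Finset V → ℝ) (hmono : ∀ A B : Finset V, A ⊆ B → h A ≤ h B) :
    ∀ (σ : List (Finset V)) (E' Eg : Finset (Finset V)), Dominated E' Eg →
      ((elimUs E' (refine σ)).map h).foldr max 0 ≤
      ((elimUs Eg σ).map h).foldr max 0 := by
  intro σ
  induction σ with
  | nil => intro E' Eg _; simp [refine, elimUs]
  | cons X σ ih =>
    intro E' Eg hd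
    obtain ⟨hU, hd'⟩ := blockStep Eg X E' hd
    rw [refine, elimUs_append, List.map_append, List.foldr_append]
    rw [elimUs, List.map_cons, List.foldr_cons]
    apply foldr_max_le
    · exact (ih _ _ hd').trans (le_max_right _ _)
    · intro y hy
      rw [List.mem_map] at hy
      obtain ⟨U, hUmem, rfl⟩ := hy
      exact (hmono _ _ (hU U hUmem)).trans (le_max_left _ _)

lemma refine_mem {σ : List (Finset V)} {t : Finset V} (ht : t ∈ refine σ) :
    ∃ Y ∈ σ, ∃ y ∈ Y, t = {y} := by
  induction σ with
  | nil => simp [refine] at ht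
  | cons X σ ih =>
    rw [refine, List.mem_append] at ht
    rcases ht with ht | ht
    · rw [List.mem_map] at ht
      obtain ⟨y, hy, rfl⟩ := ht
      exact ⟨X, by simp, y, Finset.mem_toList.1 hy, rfl⟩
    · obtain ⟨Y, hY, r⟩ := ih ht
      exact ⟨Y, by simp [hY], r⟩

lemma refine_union (σ : List (Finset V)) :
    (refine σ).foldr (· ∪ ·) ∅ = σ.foldr (· ∪ ·) ∅ := by
  induction σ with
  | nil => rfl
  | cons X σ ih =>
    rw [refine, List.foldr_append, List.foldr_cons, ih]
    generalize σ.foldr (· ∪ ·) ∅ = a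
    have : ∀ (l : List V) (a : Finset V),
        (l.map fun x => ({x} : Finset V)).foldr (· ∪ ·) a = l.toFinset ∪ a := by
      intro l
      induction l with
      | nil => simp
      | cons x l ihl => intro a; simp [ihl, Finset.insert_eq, Finset.union_assoc, - Finset.singleton_union]
    rw [this, Finset.toList_toFinset]

lemma refine_pairwise {σ : List (Finset V)} (hp : σ.Pairwise Disjoint) :
    (refine σ).Pairwise Disjoint := by
  induction σ with
  | nil => exact List.Pairwise.nil
  | cons X σ ih =>
    rw [List.pairwise_cons] at hp
    rw [refine, List.pairwise_append]
    refine ⟨?_, ih hp.2, ?_⟩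
    · rw [List.pairwise_map]
      exact (Finset.nodup_toList X).imp fun hne =>
        Finset.disjoint_singleton.2 (by simpa using hne)
    · intro s hs t ht
      rw [List.mem_map] at hs
      obtain ⟨x, hx, rfl⟩ := hs
      obtain ⟨Y, hY, y, hy, rfl⟩ := refine_mem ht
      rw [Finset.disjoint_singleton]
      intro hxy
      exact Finset.disjoint_left.1 (hp.1 Y hY) (Finset.mem_toList.1 hx) (hxy ▸ hy)

lemma refine_order {W : Type*} [DecidableEq W] [Fintype W] {σ : List (Finset W)}
    (hσ : (∀ X ∈ σ, X.Nonempty) ∧ σ.Pairwise Disjoint ∧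
      σ.foldr (· ∪ ·) ∅ = (Finset.univ : Finset W)) :
    ((∀ X ∈ refine σ, X.Nonempty) ∧ (refine σ).Pairwise Disjoint ∧
      (refine σ).foldr (· ∪ ·) ∅ = (Finset.univ : Finset W)) ∧
    ∀ X ∈ refine σ, X.card = 1 := by
  refine ⟨⟨?_, refine_pairwise hσ.2.1, (refine_union σ).trans hσ.2.2⟩, ?_⟩
  · intro X hX
    obtain ⟨Y, _, y, _, rfl⟩ := refine_mem hX
    exact Finset.singleton_nonempty y
  · intro X hX
    obtain ⟨Y, _, y, _, rfl⟩ := refine_mem hX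
    exact Finset.card_singleton y

lemma sing_union (l : List V) (a : Finset V) :
    (l.map fun x => ({x} : Finset V)).foldr (· ∪ ·) a = l.toFinset ∪ a := by
  induction l with
  | nil => simp
  | cons x l ihl => simp [ihl, Finset.insert_eq, Finset.union_assoc, - Finset.singleton_union]

lemma part1 {W : Type*} [DecidableEq W] [Fintype W] (E : Finset (Finset W))
    (h : Finset W → ℝ)
    (hmono : ∀ A B : Finset W, A ⊆ B → h A ≤ h B) :
    sInf {x : ℝ | ∃ σ : List (Finset W), ((∀ X ∈ σ, X.Nonempty) ∧ σ.Pairwise Disjoint ∧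
          σ.foldr (· ∪ ·) ∅ = (Finset.univ : Finset W)) ∧
        (∀ X ∈ σ, X.card = 1) ∧ x = ((elimUs E σ).map h).foldr max 0} =
    sInf {x : ℝ | ∃ σ : List (Finset W), ((∀ X ∈ σ, X.Nonempty) ∧ σ.Pairwise Disjoint ∧
          σ.foldr (· ∪ ·) ∅ = (Finset.univ : Finset W)) ∧
        x = ((elimUs E σ).map h).foldr max 0} := by
  set P := {x : ℝ | ∃ σ : List (Finset W), ((∀ X ∈ σ, X.Nonempty) ∧ σ.Pairwise Disjoint ∧
      σ.foldr (· ∪ ·) ∅ = (Finset.univ : Finset W)) ∧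
      (∀ X ∈ σ, X.card = 1) ∧ x = ((elimUs E σ).map h).foldr max 0} with hPdef
  set G := {x : ℝ | ∃ σ : List (Finset W), ((∀ X ∈ σ, X.Nonempty) ∧ σ.Pairwise Disjoint ∧
      σ.foldr (· ∪ ·) ∅ = (Finset.univ : Finset W)) ∧
      x = ((elimUs E σ).map h).foldr max 0} with hGdef
  have hPG : P ⊆ G := by rintro x ⟨σ, h1, _, h3⟩; exact ⟨σ, h1, h3⟩
  have hbddG : BddBelow G := by
    refine ⟨0, ?_⟩
    rintro x ⟨σ, _, rfl⟩
    exact foldr_max_nonneg _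
  have hbddP : BddBelow P := hbddG.mono hPG
  have hPne : P.Nonempty := by
    refine ⟨((elimUs E ((Finset.univ : Finset W).toList.map fun x => ({x} : Finset W))).map
      h).foldr max 0, (Finset.univ : Finset W).toList.map (fun x => ({x} : Finset W)),
      ⟨?_, ?_, ?_⟩, ?_, rfl⟩
    · intro X hX
      rw [List.mem_map] at hX
      obtain ⟨y, _, rfl⟩ := hX
      exact Finset.singleton_nonempty y
    · rw [List.pairwise_map]
      exact (Finset.nodup_toList _).imp fun hne =>
        Finset.disjoint_singleton.2 (by simpa using hne)
    · rw [sing_union, Finset.toList_toFinset, Finset.union_empty]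
    · intro X hX
      rw [List.mem_map] at hX
      obtain ⟨y, _, rfl⟩ := hX
      exact Finset.card_singleton y
  have hGne : G.Nonempty := hPne.mono hPG
  have key : ∀ x ∈ G, ∃ y ∈ P, y ≤ x := by
    rintro x ⟨σ, hσ, rfl⟩
    obtain ⟨hro, hrc⟩ := refine_order hσ
    exact ⟨((elimUs E (refine σ)).map h).foldr max 0, ⟨refine σ, hro, hrc, rfl⟩,
      main_ineq h hmono σ E E fun e he => ⟨e, he, subset_rfl⟩⟩
  refine le_antisymm ?_ (csInf_le_csInf hbddG hPne hPG)
  refine le_csInf hGne fun x hx => ?_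
  obtain ⟨y, hy, hyx⟩ := key x hx
  exact (csInf_le hbddP hy).trans hyx

end GenElimAux

/-- for every hypergraph and every monotone nonnegative set
function `h`, the minimum over plain elimination orders of `max_i h(U_i)`
equals the minimum over generalized elimination orders; consequently the
submodular width can equivalently be defined using generalized elimination
orders. -/
theorem gen_elim_orders_equiv_plain {V : Type*} [DecidableEq V] [Fintype V]
    (E : Finset (Finset V)) :
    (∀ h : Finset V → ℝ, (∀ A : Finset V, 0 ≤ h A) →
      (∀ A B : Finset V, A ⊆ B → h A ≤ h B) →
      sInf {x : ℝ | ∃ σ : List (Finset V), IsGenElimOrder σ ∧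
          (∀ X ∈ σ, X.card = 1) ∧ x = ((elimUs E σ).map h).foldr max 0} =
      sInf {x : ℝ | ∃ σ : List (Finset V), IsGenElimOrder σ ∧
          x = ((elimUs E σ).map h).foldr max 0}) ∧
    sSup {x : ℝ | ∃ h : Finset V → ℝ, IsPolymatroid h ∧ (∀ e ∈ E, h e ≤ 1) ∧
        x = sInf {y : ℝ | ∃ σ : List (Finset V), IsGenElimOrder σ ∧
            (∀ X ∈ σ, X.card = 1) ∧ y = ((elimUs E σ).map h).foldr max 0}} =
    sSup {x : ℝ | ∃ h : Finset V → ℝ, IsPolymatroid h ∧ (∀ e ∈ E, h e ≤ 1) ∧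
        x = sInf {y : ℝ | ∃ σ : List (Finset V), IsGenElimOrder σ ∧
            y = ((elimUs E σ).map h).foldr max 0}} := by
  constructor
  · intro h _ hmono
    exact GenElimAux.part1 E h hmono
  · congr 1
    ext x
    simp only [Set.mem_setOf_eq]
    constructor
    · rintro ⟨h, hp, he, rfl⟩
      exact ⟨h, hp, he, GenElimAux.part1 E h hp.2.2.1⟩
    · rintro ⟨h, hp, he, rfl⟩
      exact ⟨h, hp, he, (GenElimAux.part1 E h hp.2.2.1).symm⟩
end

section
/- Let H = (V, E) be a clustered hypergraph, i.e., for every pair of distinct vertices u, v ∈ V there is a hyperedge e ∈ E with u, v ∈ e. Then: (i) for every generalized elimination order σ̄ of V, U_1^{σ̄} = V (and hence U_i^{σ̄} ⊆ U_1^{σ̄} for every i); and (ii) subw(H) = ρ*(H), the fractional edge cover number of H. -/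
open Finset

/-- `W` is a fractional edge cover of the hypergraph with hyperedges `E`. -/
def IsFracEdgeCover {V : Type*} [DecidableEq V] [Fintype V]
    (E : Finset (Finset V)) (W : Finset V → ℝ) : Prop :=
  (∀ e ∈ E, 0 ≤ W e ∧ W e ≤ 1) ∧
    ∀ v : V, 1 ≤ ∑ e ∈ E.filter (fun e => v ∈ e), W e

/-- The fractional edge cover number `ρ*`. -/
noncomputable def fracCoverNumber {V : Type*} [DecidableEq V] [Fintype V]
    (E : Finset (Finset V)) : ℝ :=
  sInf {s : ℝ | ∃ W : Finset V → ℝ, IsFracEdgeCover E W ∧ s = ∑ e ∈ E, W e}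



lemma cone_caratheodory {H : Type*} [AddCommGroup H] [Module ℝ H] {ι : Type*} [DecidableEq ι]
    (g : ι → H) (s : Finset ι) :
    ∀ (c : ι → ℝ), (∀ i ∈ s, 0 ≤ c i) →
      ∃ t ⊆ s, (LinearIndependent ℝ (fun i : t => g i)) ∧
        ∃ d : ι → ℝ, (∀ i ∈ t, 0 ≤ d i) ∧ ∑ i ∈ t, d i • g i = ∑ i ∈ s, c i • g i := by
  induction s using Finset.strongInduction with
  | _ s ih =>
    intro c hc
    by_cases hli : LinearIndependent ℝ (fun i : s => g i)
    · exact ⟨s, Finset.Subset.refl s, hli, c, hc, rfl⟩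
    · -- get a nontrivial relation
      obtain ⟨d, hd0, i₀, hi₀⟩ := Fintype.not_linearIndependent_iff.1 hli
      -- extend to ι
      set D0 : ι → ℝ := fun i => if h : i ∈ s then d ⟨i, h⟩ else 0 with hD0
      have hDsum : ∑ i ∈ s, D0 i • g i = 0 := by
        rw [← Finset.sum_attach s (fun i => D0 i • g i)]
        rw [← hd0]
        refine Finset.sum_congr rfl fun i _ => ?_
        simp [hD0, i.2]
      have hDne : D0 (i₀ : ι) ≠ 0 := by simp [hD0, i₀.2, hi₀]
      -- make the distinguished coefficient positive
      set D : ι → ℝ := if 0 < D0 (i₀ : ι) then D0 else -D0 with hD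
      have hDsum' : ∑ i ∈ s, D i • g i = 0 := by
        by_cases h : 0 < D0 (i₀ : ι)
        · simp [hD, h, hDsum]
        · simp only [hD, if_neg h, Pi.neg_apply, neg_smul, Finset.sum_neg_distrib, hDsum, neg_zero]
      have hDpos : 0 < D (i₀ : ι) := by
        rcases lt_or_gt_of_ne hDne with h | h
        · have : ¬ (0 < D0 (i₀ : ι)) := by linarith
          simp [hD, this]; linarith
        · simp [hD, h]
      -- the set of positive coefficients
      have hTne : (s.filter (fun i => 0 < D i)).Nonempty := ⟨i₀, Finset.mem_filter.2 ⟨i₀.2, hDpos⟩⟩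
      obtain ⟨j, hjT, hjmin⟩ := Finset.exists_min_image _ (fun i => c i / D i) hTne
      rw [Finset.mem_filter] at hjT
      obtain ⟨hjs, hjpos⟩ := hjT
      set lam : ℝ := c j / D j with hlam
      have hlam0 : 0 ≤ lam := div_nonneg (hc j hjs) hjpos.le
      set c' : ι → ℝ := fun i => c i - lam * D i with hc'
      have hc'nonneg : ∀ i ∈ s, 0 ≤ c' i := by
        intro i his
        rcases le_or_gt (D i) 0 with h | h
        · have : lam * D i ≤ 0 := mul_nonpos_of_nonneg_of_nonpos hlam0 h
          have := hc i his; simp only [hc']; linarith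
        · have hq : lam * D i ≤ c i := (le_div_iff₀ h).1 (hjmin i (Finset.mem_filter.2 ⟨his, h⟩))
          simp only [hc']; linarith
      have hc'j : c' j = 0 := by simp only [hc', hlam]; field_simp; ring
      have hsum' : ∑ i ∈ s.erase j, c' i • g i = ∑ i ∈ s, c i • g i := by
        have h1 : ∑ i ∈ s, c' i • g i = ∑ i ∈ s, c i • g i - lam • ∑ i ∈ s, D i • g i := by
          rw [Finset.smul_sum, ← Finset.sum_sub_distrib]
          refine Finset.sum_congr rfl fun i _ => ?_
          simp [hc', sub_smul, smul_smul]
        have h2 : ∑ i ∈ s.erase j, c' i • g i = ∑ i ∈ s, c' i • g i := by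
          rw [← Finset.sum_erase_add s _ hjs, hc'j]; simp
        rw [h2, h1, hDsum', smul_zero, sub_zero]
      obtain ⟨t, hts, hliT, d', hd'0, hd'sum⟩ := ih (s.erase j) (Finset.erase_ssubset hjs) c'
        (fun i hi => hc'nonneg i (Finset.mem_of_mem_erase hi))
      exact ⟨t, hts.trans (Finset.erase_subset j s), hliT, d', hd'0, by rw [hd'sum, hsum']⟩


section
variable {n ι : Type*} [Fintype n] [Fintype ι] [DecidableEq ι]

/-- linear map sending coefficients on `t` to the combination of generators -/
noncomputable def coneMap (g : ι → EuclideanSpace ℝ n) (t : Finset ι) :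
    (↥t → ℝ) →ₗ[ℝ] EuclideanSpace ℝ n where
  toFun c := ∑ i : t, c i • g i
  map_add' a b := by
    simp [add_smul, Finset.sum_add_distrib]
  map_smul' r a := by
    simp [Finset.smul_sum, smul_smul]

lemma cone_closed (g : ι → EuclideanSpace ℝ n) :
    IsClosed {x : EuclideanSpace ℝ n | ∃ c : ι → ℝ, (∀ i, 0 ≤ c i) ∧ x = ∑ i, c i • g i} := by
  classical
  have key : {x : EuclideanSpace ℝ n | ∃ c : ι → ℝ, (∀ i, 0 ≤ c i) ∧ x = ∑ i, c i • g i} =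
      ⋃ t : Finset ι,
        (if _h : LinearIndependent ℝ (fun i : t => g i) then
          (coneMap g t) '' {c : ↥t → ℝ | ∀ i, 0 ≤ c i} else {0}) := by
    ext x
    simp only [Set.mem_setOf_eq, Set.mem_iUnion]
    constructor
    · rintro ⟨c, hc, rfl⟩
      obtain ⟨t, _hts, hli, d, hd0, hdsum⟩ :=
        cone_caratheodory g Finset.univ c (fun i _ => hc i)
      refine ⟨t, ?_⟩
      rw [dif_pos hli]
      refine ⟨fun i => d i, fun i => hd0 i i.2, ?_⟩
      show ∑ i : t, d (i : ι) • g i = _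
      rw [← Finset.sum_attach t (fun i => d i • g i)] at hdsum
      exact hdsum
    · rintro ⟨t, hx⟩
      by_cases hli : LinearIndependent ℝ (fun i : t => g i)
      · rw [dif_pos hli] at hx
        obtain ⟨c, hc, rfl⟩ := hx
        refine ⟨fun i => if h : i ∈ t then c ⟨i, h⟩ else 0, fun i => ?_, ?_⟩
        · by_cases h : i ∈ t
          · simpa [h] using hc ⟨i, h⟩
          · simp [h]
        · show coneMap g t c = _
          rw [show (∑ i : ι, (fun i => if h : i ∈ t then c ⟨i, h⟩ else 0) i • g i)
              = ∑ i ∈ t, (if h : i ∈ t then c ⟨i, h⟩ else 0) • g i from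
            (Finset.sum_subset (Finset.subset_univ t) (by intro i _ hi; simp [hi])).symm]
          rw [← Finset.sum_attach t (fun i => (if h : i ∈ t then c ⟨i, h⟩ else 0) • g i)]
          show _ = ∑ i : t, _
          refine Finset.sum_congr rfl fun i _ => ?_
          simp [i.2]
      · rw [dif_neg hli] at hx
        simp only [Set.mem_singleton_iff] at hx
        exact ⟨fun _ => 0, fun _ => le_refl 0, by simp [hx]⟩
  rw [key]
  apply isClosed_iUnion_of_finite
  intro t
  by_cases hli : LinearIndependent ℝ (fun i : t => g i)
  · rw [dif_pos hli]
    have hker : LinearMap.ker (coneMap g t) = ⊥ := by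
      rw [LinearMap.ker_eq_bot']
      intro c hc
      exact funext (Fintype.linearIndependent_iff.1 hli c hc)
    have hemb := LinearMap.isClosedEmbedding_of_injective hker
    apply hemb.isClosedMap
    have : {c : ↥t → ℝ | ∀ i, 0 ≤ c i} = ⋂ i : t, {c | 0 ≤ c i} :=
      by ext c; simp
    rw [this]
    exact isClosed_iInter fun i => isClosed_le continuous_const (continuous_apply i)
  · rw [dif_neg hli]
    exact isClosed_singleton
end


lemma farkas {m n : Type*} [Fintype m] [Fintype n] [DecidableEq m] [DecidableEq n]
    (A : m → n → ℝ) (b : m → ℝ)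
    (hinf : ¬ ∃ x : n → ℝ, ∀ i, ∑ j, A i j * x j ≤ b i) :
    ∃ y : m → ℝ, (∀ i, 0 ≤ y i) ∧ (∀ j, ∑ i, y i * A i j = 0) ∧ ∑ i, y i * b i < 0 := by
  classical
  -- generators
  set g : (n ⊕ n ⊕ m) → EuclideanSpace ℝ m := fun k =>
    Sum.elim (fun j => (WithLp.toLp 2 (fun i => A i j) : EuclideanSpace ℝ m))
      (Sum.elim (fun j => (WithLp.toLp 2 (fun i => -A i j) : EuclideanSpace ℝ m))
        (fun i₀ => (WithLp.toLp 2 (Pi.single i₀ (1:ℝ)) : EuclideanSpace ℝ m))) k with hg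
  set C : Set (EuclideanSpace ℝ m) :=
    {x | ∃ c : (n ⊕ n ⊕ m) → ℝ, (∀ k, 0 ≤ c k) ∧ x = ∑ k, c k • g k} with hC
  have hCzero : (0 : EuclideanSpace ℝ m) ∈ C := ⟨fun _ => 0, fun _ => le_refl 0, by simp⟩
  -- C is a convex cone
  set K : ConvexCone ℝ (EuclideanSpace ℝ m) :=
    { carrier := C
      smul_mem' := by
        rintro r hr x ⟨c, hc, rfl⟩
        exact ⟨fun k => r * c k, fun k => mul_nonneg hr.le (hc k),
          by rw [Finset.smul_sum]; exact Finset.sum_congr rfl fun k _ => by simp [smul_smul]⟩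
      add_mem' := by
        rintro x ⟨c, hc, rfl⟩ y ⟨d, hd, rfl⟩
        exact ⟨fun k => c k + d k, fun k => add_nonneg (hc k) (hd k),
          by rw [← Finset.sum_add_distrib]; exact Finset.sum_congr rfl fun k _ => by simp [add_smul]⟩ } with hK
  have hbC : (WithLp.toLp 2 b : EuclideanSpace ℝ m) ∉ C := by
    rintro ⟨c, hc, hb⟩
    apply hinf
    refine ⟨fun j => c (Sum.inl j) - c (Sum.inr (Sum.inl j)), fun i => ?_⟩
    have hbi : b i = ∑ k, c k • g k i := by
      show (WithLp.toLp 2 b : EuclideanSpace ℝ m) i = _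
      rw [hb, WithLp.ofLp_sum, Finset.sum_apply]; rfl
    rw [hbi, Fintype.sum_sum_type, Fintype.sum_sum_type]
    simp only [hg, Sum.elim_inl, Sum.elim_inr, smul_eq_mul]
    have h3 : ∑ i₀ : m, c (Sum.inr (Sum.inr i₀)) * (WithLp.toLp 2 (Pi.single i₀ (1:ℝ)) : EuclideanSpace ℝ m) i
        = c (Sum.inr (Sum.inr i)) := by
      rw [Finset.sum_eq_single i]
      · simp
      · intro k _ hk; simp [Pi.single_apply, Ne.symm hk]
      · simp
    rw [h3]
    have h4 : ∑ j, A i j * (c (Sum.inl j) - c (Sum.inr (Sum.inl j)))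
        = ∑ j, c (Sum.inl j) * A i j + ∑ j, c (Sum.inr (Sum.inl j)) * -A i j := by
      rw [← Finset.sum_add_distrib]; exact Finset.sum_congr rfl fun j _ => by ring
    rw [h4]
    have := hc (Sum.inr (Sum.inr i))
    linarith
  set P : ProperCone ℝ (EuclideanSpace ℝ m) := ⟨K.toPointedCone hCzero, cone_closed g⟩ with hP
  obtain ⟨y, hy1, hy2⟩ := ProperCone.hyperplane_separation' P hbC
  have hmem : ∀ k, g k ∈ C := by
    intro k
    refine ⟨fun k' => if k' = k then 1 else 0, fun k' => by positivity, ?_⟩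
    rw [Finset.sum_eq_single k] <;> simp +contextual
  have hinner : ∀ x z : EuclideanSpace ℝ m, inner ℝ x z = ∑ i, x i * z i := by
    intro x z
    rw [PiLp.inner_apply]
    simp [RCLike.inner_apply, starRingEnd_apply, mul_comm]
  refine ⟨fun i => y i, fun i => ?_, fun j => ?_, ?_⟩
  · have := hy1 _ (hmem (Sum.inr (Sum.inr i)))
    rw [hinner] at this
    simpa [hg, Pi.single_apply] using this
  · have h1 := hy1 _ (hmem (Sum.inl j))
    have h2 := hy1 _ (hmem (Sum.inr (Sum.inl j)))
    rw [hinner] at h1 h2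
    simp only [hg, Sum.elim_inl, Sum.elim_inr] at h1 h2
    have : ∑ i, y i * A i j = ∑ i, A i j * y i := Finset.sum_congr rfl fun i _ => mul_comm _ _
    rw [this]
    have h2' : ∑ i, -A i j * y i = -∑ i, A i j * y i := by
      rw [← Finset.sum_neg_distrib]; exact Finset.sum_congr rfl fun i _ => by ring
    rw [h2'] at h2
    linarith
  · rw [real_inner_comm, hinner] at hy2
    exact hy2

section Stage4
variable {V : Type*} [DecidableEq V] [Fintype V]

lemma coverSet_bddBelow (E : Finset (Finset V)) :
    BddBelow {s : ℝ | ∃ W : Finset V → ℝ, IsFracEdgeCover E W ∧ s = ∑ e ∈ E, W e} := by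
  refine ⟨0, ?_⟩
  rintro s ⟨W, hW, rfl⟩
  exact Finset.sum_nonneg fun e he => (hW.1 e he).1

lemma coverSet_nonempty (E : Finset (Finset V)) (hcov : ∀ v : V, ∃ e ∈ E, v ∈ e) :
    {s : ℝ | ∃ W : Finset V → ℝ, IsFracEdgeCover E W ∧ s = ∑ e ∈ E, W e}.Nonempty := by
  refine ⟨∑ e ∈ E, (1:ℝ), (fun _ => 1), ⟨fun e _ => ⟨zero_le_one, le_refl 1⟩, fun v => ?_⟩, rfl⟩
  obtain ⟨e, heE, hve⟩ := hcov v
  have hne : (E.filter (fun e => v ∈ e)).Nonempty := ⟨e, Finset.mem_filter.2 ⟨heE, hve⟩⟩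
  rw [Finset.sum_const, nsmul_eq_mul, mul_one]
  exact_mod_cast Nat.one_le_iff_ne_zero.2 (Finset.card_ne_zero.2 hne)

lemma exists_opt_matching (E : Finset (Finset V)) (hcov : ∀ v : V, ∃ e ∈ E, v ∈ e) :
    ∃ y : V → ℝ, (∀ v, 0 ≤ y v) ∧ (∀ e ∈ E, ∑ v ∈ e, y v ≤ 1) ∧
      fracCoverNumber E ≤ ∑ v, y v := by
  classical
  set M : Set (V → ℝ) := {y | (∀ v, 0 ≤ y v) ∧ ∀ e ∈ E, ∑ v ∈ e, y v ≤ 1} with hM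
  have hMclosed : IsClosed M := by
    have : M = {y : V → ℝ | ∀ v, 0 ≤ y v} ∩ ⋂ e ∈ E, {y : V → ℝ | ∑ v ∈ e, y v ≤ 1} := by
      ext y; simp [hM, Set.mem_iInter]
    rw [this]
    refine IsClosed.inter ?_ (isClosed_biInter fun e _ => ?_)
    · have : {y : V → ℝ | ∀ v, 0 ≤ y v} = ⋂ v, {y : V → ℝ | 0 ≤ y v} := by ext; simp
      rw [this]
      exact isClosed_iInter fun v => isClosed_le continuous_const (continuous_apply v)
    · exact isClosed_le (by continuity) continuous_const
  have hMsub : M ⊆ Set.Icc (0 : V → ℝ) 1 := by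
    rintro y ⟨hy0, hy1⟩
    refine ⟨fun v => hy0 v, fun v => ?_⟩
    obtain ⟨e, heE, hve⟩ := hcov v
    calc y v ≤ ∑ u ∈ e, y u := Finset.single_le_sum (fun u _ => hy0 u) hve
    _ ≤ 1 := hy1 e heE
  have hMcp : IsCompact M := IsCompact.of_isClosed_subset isCompact_Icc hMclosed hMsub
  have h0M : (0 : V → ℝ) ∈ M := ⟨fun _ => le_refl 0, fun e _ => by simp⟩
  have hcont : Continuous (fun y : V → ℝ => ∑ v, y v) := by continuity
  obtain ⟨ystar, hyM, hymax⟩ := hMcp.exists_isMaxOn ⟨0, h0M⟩ hcont.continuousOn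
  set ν : ℝ := ∑ v, ystar v with hν
  refine ⟨ystar, hyM.1, hyM.2, ?_⟩
  by_contra hlt
  push_neg at hlt
  -- hlt : ν < fracCoverNumber E
  -- set up the Farkas system
  set A : ((↥E) ⊕ V ⊕ Unit) → (↥E) → ℝ :=
    Sum.elim (fun e' e => if e' = e then -1 else 0)
      (Sum.elim (fun v e => if v ∈ (e : Finset V) then -1 else 0) (fun _ _ => 1)) with hA
  set b : ((↥E) ⊕ V ⊕ Unit) → ℝ :=
    Sum.elim (fun _ => 0) (Sum.elim (fun _ => -1) (fun _ => ν)) with hb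
  have hinf : ¬ ∃ x : (↥E) → ℝ, ∀ i, ∑ j, A i j * x j ≤ b i := by
    rintro ⟨W, hW⟩
    have hWpos : ∀ e : ↥E, 0 ≤ W e := by
      intro e
      have := hW (Sum.inl e)
      simp only [hA, hb, Sum.elim_inl] at this
      rw [Finset.sum_eq_single e (fun e' _ h => by simp [Ne.symm h]) (by simp)] at this
      simpa using this
    have hWcov : ∀ v : V, 1 ≤ ∑ e ∈ E.filter (fun e => v ∈ e), (fun e =>
        if h : e ∈ E then W ⟨e, h⟩ else 0) e := by
      intro v
      have := hW (Sum.inr (Sum.inl v))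
      simp only [hA, hb, Sum.elim_inr, Sum.elim_inl] at this
      have heq : ∑ e ∈ E.filter (fun e => v ∈ e), (fun e =>
          if h : e ∈ E then W ⟨e, h⟩ else 0) e
          = ∑ j : ↥E, if v ∈ (j : Finset V) then W j else 0 := by
        rw [Finset.sum_filter, ← Finset.sum_coe_sort E]
        refine Finset.sum_congr rfl fun j _ => ?_
        simp [j.2]
      rw [heq]
      have : ∑ j : ↥E, (if v ∈ (j : Finset V) then W j else 0)
          = - ∑ j : ↥E, (if v ∈ (j : Finset V) then (-1:ℝ) else 0) * W j := by
        rw [← Finset.sum_neg_distrib]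
        refine Finset.sum_congr rfl fun j _ => ?_
        by_cases h : v ∈ (j : Finset V) <;> simp [h]
      rw [this]
      linarith
    have hWtot : ∑ j : ↥E, W j ≤ ν := by
      have := hW (Sum.inr (Sum.inr ()))
      simpa [hA, hb] using this
    -- build a genuine (capped) cover
    set W' : Finset V → ℝ := fun e => if h : e ∈ E then min (W ⟨e, h⟩) 1 else 0 with hW'
    have hW'cover : IsFracEdgeCover E W' := by
      constructor
      · intro e he
        simp only [hW', dif_pos he]
        exact ⟨le_min (hWpos ⟨e, he⟩) zero_le_one, min_le_right _ _⟩
      · intro v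
        by_cases hbig : ∃ e₀ ∈ E.filter (fun e => v ∈ e), 1 ≤ (fun e =>
            if h : e ∈ E then W ⟨e, h⟩ else 0) e₀
        · obtain ⟨e₀, he₀, hbig⟩ := hbig
          have he₀E : e₀ ∈ E := (Finset.mem_filter.1 he₀).1
          have hterm : W' e₀ = 1 := by
            simp only [hW', dif_pos he₀E]
            rw [min_eq_right]
            simpa [dif_pos he₀E] using hbig
          calc (1:ℝ) = W' e₀ := hterm.symm
          _ ≤ ∑ e ∈ E.filter (fun e => v ∈ e), W' e := by
              refine Finset.single_le_sum (fun e he => ?_) he₀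
              have heE : e ∈ E := (Finset.mem_filter.1 he).1
              simp only [hW', dif_pos heE]
              exact le_min (hWpos ⟨e, heE⟩) zero_le_one
        · push_neg at hbig
          have : ∑ e ∈ E.filter (fun e => v ∈ e), W' e
              = ∑ e ∈ E.filter (fun e => v ∈ e), (fun e =>
                if h : e ∈ E then W ⟨e, h⟩ else 0) e := by
            refine Finset.sum_congr rfl fun e he => ?_
            have heE : e ∈ E := (Finset.mem_filter.1 he).1
            simp only [hW', dif_pos heE]
            exact min_eq_left (le_of_lt (by simpa [dif_pos heE] using hbig e he))
          rw [this]
          exact hWcov v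
    have hW'sum : ∑ e ∈ E, W' e ≤ ν := by
      calc ∑ e ∈ E, W' e ≤ ∑ e ∈ E, (fun e => if h : e ∈ E then W ⟨e, h⟩ else 0) e := by
            refine Finset.sum_le_sum fun e he => ?_
            simp only [hW', dif_pos he]
            exact min_le_left _ _
      _ = ∑ j : ↥E, W j := by
            rw [← Finset.sum_coe_sort E]
            exact Finset.sum_congr rfl fun j _ => by simp [j.2]
      _ ≤ ν := hWtot
    have : fracCoverNumber E ≤ ∑ e ∈ E, W' e :=
      csInf_le (coverSet_bddBelow E) ⟨W', hW'cover, rfl⟩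
    linarith
  obtain ⟨y, hy0, hycol, hyb⟩ := farkas A b hinf
  set z : V → ℝ := fun v => y (Sum.inr (Sum.inl v)) with hz
  set t : ℝ := y (Sum.inr (Sum.inr ())) with ht
  have hz0 : ∀ v, 0 ≤ z v := fun v => hy0 _
  have ht0 : 0 ≤ t := hy0 _
  have hcol : ∀ e : ↥E, ∑ v ∈ (e : Finset V), z v ≤ t := by
    intro e
    have h0 := hycol e
    rw [Fintype.sum_sum_type, Fintype.sum_sum_type] at h0
    have h1 : ∑ e' : ↥E, y (Sum.inl e') * A (Sum.inl e') e = - y (Sum.inl e) := by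
      rw [Finset.sum_eq_single e (fun e' _ h => by simp [hA, h]) (by simp)]
      simp [hA]
    have h2 : ∑ v : V, y (Sum.inr (Sum.inl v)) * A (Sum.inr (Sum.inl v)) e
        = - ∑ v ∈ (e : Finset V), z v := by
      have hterm : ∀ v, y (Sum.inr (Sum.inl v)) * A (Sum.inr (Sum.inl v)) e
          = if v ∈ (e : Finset V) then -z v else 0 := by
        intro v; by_cases h : v ∈ (e : Finset V) <;> simp [hA, h, hz]
      rw [Finset.sum_congr rfl (fun v _ => hterm v), Finset.sum_ite_mem, Finset.univ_inter,
        ← Finset.sum_neg_distrib]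
    have h3 : ∑ u : Unit, y (Sum.inr (Sum.inr u)) * A (Sum.inr (Sum.inr u)) e = t := by
      simp [hA, ht]
    rw [h1, h2, h3] at h0
    have := hy0 (Sum.inl e)
    linarith
  have hbval : t * ν < ∑ v, z v := by
    rw [Fintype.sum_sum_type, Fintype.sum_sum_type] at hyb
    have h1 : ∑ e' : ↥E, y (Sum.inl e') * b (Sum.inl e') = 0 := by simp [hb]
    have h2 : ∑ v : V, y (Sum.inr (Sum.inl v)) * b (Sum.inr (Sum.inl v)) = - ∑ v, z v := by
      rw [← Finset.sum_neg_distrib]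
      exact Finset.sum_congr rfl fun v _ => by simp [hb, hz]
    have h3 : ∑ u : Unit, y (Sum.inr (Sum.inr u)) * b (Sum.inr (Sum.inr u)) = t * ν := by
      simp [hb, ht]
    rw [h1, h2, h3] at hyb
    linarith
  rcases eq_or_lt_of_le ht0 with hteq | htpos
  · -- t = 0 : all z vanish
    have hzzero : ∀ v : V, z v = 0 := by
      intro v
      obtain ⟨e, heE, hve⟩ := hcov v
      have h1 : ∑ u ∈ e, z u ≤ 0 := by
        have := hcol ⟨e, heE⟩
        rw [← hteq] at this
        exact this
      have h2 : ∑ u ∈ e, z u = 0 :=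
        le_antisymm h1 (Finset.sum_nonneg fun u _ => hz0 u)
      have := (Finset.sum_eq_zero_iff_of_nonneg (fun u _ => hz0 u)).1 h2
      exact this v hve
    have : ∑ v, z v = 0 := Finset.sum_eq_zero fun v _ => hzzero v
    rw [this, ← hteq] at hbval
    simp at hbval
  · -- t > 0 : z/t is a better matching
    have hmem : (fun v => z v / t) ∈ M := by
      refine ⟨fun v => div_nonneg (hz0 v) ht0, fun e heE => ?_⟩
      rw [← Finset.sum_div]
      rw [div_le_one htpos]
      exact hcol ⟨e, heE⟩
    have := hymax hmem
    simp only [Set.mem_setOf_eq] at this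
    have hsum : ∑ v, z v / t = (∑ v, z v) / t := by rw [Finset.sum_div]
    have : (∑ v, z v) / t ≤ ν := by
      have h := hymax hmem
      simpa [hsum] using h
    rw [div_le_iff₀ htpos] at this
    nlinarith
end Stage4

section Stage5
variable {V : Type*} [DecidableEq V] [Fintype V]

lemma polymatroid_le_cover (E : Finset (Finset V)) (h : Finset V → ℝ)
    (hp : IsPolymatroid h) (hd : ∀ e ∈ E, h e ≤ 1) (W : Finset V → ℝ)
    (hW : IsFracEdgeCover E W) : h Finset.univ ≤ ∑ e ∈ E, W e := by
  classical
  obtain ⟨h0, hnn, hmono, hsub⟩ := hp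
  set n := Fintype.card V with hn
  set f : V ≃ Fin n := Fintype.equivFin V with hf
  set g : Finset V → ℕ → ℝ := fun S i => h (S.filter (fun u => (f u : ℕ) < i)) with hg
  have hinj : ∀ u v : V, (f u : ℕ) = (f v : ℕ) → u = v := by
    intro u v huv
    exact f.injective (Fin.ext huv)
  have tele : ∀ S : Finset V, ∑ i ∈ Finset.range n, (g S (i+1) - g S i) = h S := by
    intro S
    rw [Finset.sum_range_sub (fun i => g S i)]
    have h1 : g S n = h S := by
      simp only [hg]
      congr 1
      exact Finset.filter_true_of_mem fun u _ => (f u).is_lt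
    have h2 : g S 0 = 0 := by
      simp only [hg]
      rw [Finset.filter_false_of_mem fun u _ => by omega]
      exact h0
    rw [h1, h2, sub_zero]
  have reindex : ∀ S : Finset V, ∑ v : V, (g S ((f v : ℕ) + 1) - g S (f v)) = h S := by
    intro S
    rw [← tele S, ← Fin.sum_univ_eq_sum_range (fun i => g S (i+1) - g S i) n]
    exact Equiv.sum_comp f (fun i : Fin n => g S ((i : ℕ) + 1) - g S i)
  set m : V → ℝ := fun v => g Finset.univ ((f v : ℕ) + 1) - g Finset.univ (f v) with hm
  have hm0 : ∀ v, 0 ≤ m v := by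
    intro v
    have hss : Finset.univ.filter (fun u => (f u : ℕ) < (f v : ℕ)) ⊆
        Finset.univ.filter (fun u => (f u : ℕ) < (f v : ℕ) + 1) := by
      intro u hu
      simp only [Finset.mem_filter, Finset.mem_univ, true_and] at hu ⊢
      omega
    have := hmono _ _ hss
    simp only [hm, hg]
    linarith
  have marg : ∀ e : Finset V, ∀ v ∈ e, m v ≤ g e ((f v : ℕ) + 1) - g e (f v) := by
    intro e v hv
    set i : ℕ := (f v : ℕ) with hi
    have hAB1 : (Finset.univ.filter (fun u => (f u : ℕ) < i)) ∪ (e.filter (fun u => (f u : ℕ) < i + 1))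
        = Finset.univ.filter (fun u => (f u : ℕ) < i + 1) := by
      ext u
      simp only [Finset.mem_union, Finset.mem_filter, Finset.mem_univ, true_and]
      constructor
      · rintro (hlt | ⟨_, hlt⟩) <;> omega
      · intro hlt
        rcases Nat.lt_or_ge (f u : ℕ) i with hc | hc
        · exact Or.inl hc
        · have : (f u : ℕ) = i := by omega
          have : u = v := hinj u v (by rw [this, hi])
          exact Or.inr ⟨this ▸ hv, by omega⟩
    have hAB2 : (Finset.univ.filter (fun u => (f u : ℕ) < i)) ∩ (e.filter (fun u => (f u : ℕ) < i + 1))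
        = e.filter (fun u => (f u : ℕ) < i) := by
      ext u
      simp only [Finset.mem_inter, Finset.mem_filter, Finset.mem_univ, true_and]
      constructor
      · rintro ⟨hlt, hue, _⟩; exact ⟨hue, hlt⟩
      · rintro ⟨hue, hlt⟩; exact ⟨hlt, hue, by omega⟩
    have := hsub (Finset.univ.filter (fun u => (f u : ℕ) < i))
      (e.filter (fun u => (f u : ℕ) < i + 1))
    rw [hAB1, hAB2] at this
    simp only [hm, hg]
    linarith
  have edge_tele : ∀ e : Finset V, ∑ v ∈ e, (g e ((f v : ℕ) + 1) - g e (f v)) = h e := by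
    intro e
    rw [← reindex e]
    refine Finset.sum_subset (Finset.subset_univ e) fun v _ hv => ?_
    have : e.filter (fun u => (f u : ℕ) < (f v : ℕ) + 1) = e.filter (fun u => (f u : ℕ) < (f v : ℕ)) := by
      ext u
      simp only [Finset.mem_filter]
      constructor
      · rintro ⟨hue, hlt⟩
        refine ⟨hue, ?_⟩
        rcases Nat.lt_or_ge (f u : ℕ) (f v : ℕ) with hc | hc
        · exact hc
        · have heq : (f u : ℕ) = (f v : ℕ) := by omega
          exact absurd (hinj u v heq ▸ hue) hv
      · rintro ⟨hue, hlt⟩; exact ⟨hue, by omega⟩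
    simp only [hg, this, sub_self]
  calc h Finset.univ = ∑ v, m v := (reindex Finset.univ).symm
  _ ≤ ∑ v, (∑ e ∈ E.filter (fun e => v ∈ e), W e) * m v := by
      refine Finset.sum_le_sum fun v _ => ?_
      calc m v = 1 * m v := (one_mul _).symm
      _ ≤ (∑ e ∈ E.filter (fun e => v ∈ e), W e) * m v :=
        mul_le_mul_of_nonneg_right (hW.2 v) (hm0 v)
  _ = ∑ v, ∑ e ∈ E, (if v ∈ e then W e * m v else 0) := by
      refine Finset.sum_congr rfl fun v _ => ?_
      rw [Finset.sum_mul, Finset.sum_filter]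
  _ = ∑ e ∈ E, ∑ v, (if v ∈ e then W e * m v else 0) := Finset.sum_comm
  _ = ∑ e ∈ E, W e * ∑ v ∈ e, m v := by
      refine Finset.sum_congr rfl fun e _ => ?_
      rw [Finset.sum_ite_mem, Finset.univ_inter, Finset.mul_sum]
  _ ≤ ∑ e ∈ E, W e * h e := by
      refine Finset.sum_le_sum fun e he => ?_
      refine mul_le_mul_of_nonneg_left ?_ (hW.1 e he).1
      calc ∑ v ∈ e, m v ≤ ∑ v ∈ e, (g e ((f v : ℕ) + 1) - g e (f v)) :=
            Finset.sum_le_sum fun v hv => marg e v hv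
      _ = h e := edge_tele e
  _ ≤ ∑ e ∈ E, W e * 1 := by
      refine Finset.sum_le_sum fun e he => ?_
      exact mul_le_mul_of_nonneg_left (hd e he) (hW.1 e he).1
  _ = ∑ e ∈ E, W e := by simp
end Stage5


section Stage6
variable {V : Type*} [DecidableEq V] [Fintype V]

lemma elimU_eq_univ (E : Finset (Finset V))
    (hcov : ∀ v : V, ∃ e ∈ E, v ∈ e)
    (hclust : ∀ u v : V, u ≠ v → ∃ e ∈ E, u ∈ e ∧ v ∈ e)
    (X : Finset V) (hX : X.Nonempty) : elimU E X = Finset.univ := by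
  apply Finset.eq_univ_iff_forall.2
  intro v
  obtain ⟨u, hu⟩ := hX
  rcases eq_or_ne u v with rfl | hne
  · obtain ⟨e, heE, hve⟩ := hcov u
    exact Finset.mem_sup.2 ⟨e, Finset.mem_filter.2 ⟨heE,
      Finset.not_disjoint_iff.2 ⟨u, hve, hu⟩⟩, hve⟩
  · obtain ⟨e, heE, hue, hve⟩ := hclust u v hne
    exact Finset.mem_sup.2 ⟨e, Finset.mem_filter.2 ⟨heE,
      Finset.not_disjoint_iff.2 ⟨u, hue, hu⟩⟩, hve⟩

lemma foldr_max_le (c : ℝ) (hc : 0 ≤ c) :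
    ∀ L : List ℝ, (∀ a ∈ L, a ≤ c) → L.foldr max 0 ≤ c := by
  intro L
  induction L with
  | nil => intro _; simpa using hc
  | cons a L ih =>
    intro hmem
    simp only [List.foldr_cons]
    exact max_le (hmem a List.mem_cons_self) (ih fun b hb => hmem b (List.mem_cons_of_mem a hb))

lemma elim_value (E : Finset (Finset V))
    (hcov : ∀ v : V, ∃ e ∈ E, v ∈ e)
    (hclust : ∀ u v : V, u ≠ v → ∃ e ∈ E, u ∈ e ∧ v ∈ e)
    (h : Finset V → ℝ) (hp : IsPolymatroid h)
    (σ : List (Finset V)) (hσ : IsGenElimOrder σ) :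
    ((elimUs E σ).map h).foldr max 0 = h Finset.univ := by
  obtain ⟨h0, hnn, hmono, _⟩ := hp
  cases σ with
  | nil =>
    have huniv : (Finset.univ : Finset V) = ∅ := hσ.2.2.symm
    simp [elimUs, huniv, h0]
  | cons X σ' =>
    have hXne : X.Nonempty := hσ.1 X List.mem_cons_self
    show ((elimU E X :: elimUs (elimStep E X) σ').map h).foldr max 0 = h Finset.univ
    rw [elimU_eq_univ E hcov hclust X hXne]
    simp only [List.map_cons, List.foldr_cons]
    apply max_eq_left
    apply foldr_max_le _ (hnn _)
    intro a ha
    obtain ⟨U, _, rfl⟩ := List.mem_map.1 ha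
    exact hmono U Finset.univ (Finset.subset_univ U)

lemma foldr_union_map_singleton (l : List V) :
    (l.map fun v => ({v} : Finset V)).foldr (· ∪ ·) ∅ = l.toFinset := by
  induction l with
  | nil => simp
  | cons a l ih =>
    simp only [List.map_cons, List.foldr_cons, ih, List.toFinset_cons]
    ext u; simp [or_comm]

lemma plain_order_exists :
    ∃ σ : List (Finset V), IsGenElimOrder σ ∧ ∀ X ∈ σ, X.card = 1 := by
  refine ⟨(Finset.univ.toList).map (fun v => ({v} : Finset V)), ⟨?_, ?_, ?_⟩, ?_⟩
  · intro X hX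
    obtain ⟨v, _, rfl⟩ := List.mem_map.1 hX
    exact Finset.singleton_nonempty v
  · rw [List.pairwise_map]
    have hnd : (Finset.univ.toList : List V).Nodup := Finset.nodup_toList _
    exact List.Pairwise.imp (fun hne => by simp [Finset.disjoint_singleton, hne, Ne.symm hne]) hnd
  · rw [foldr_union_map_singleton, Finset.toList_toFinset]
  · intro X hX
    obtain ⟨v, _, rfl⟩ := List.mem_map.1 hX
    exact Finset.card_singleton v

end Stage6

/-- for a clustered hypergraph (every vertex lies in some
hyperedge and any two distinct vertices lie in a common hyperedge):
(i) for every nonempty generalized elimination order, `U_1 = V`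
(hence every `U_i ⊆ U_1`); and (ii) the submodular width equals the
fractional edge cover number `ρ*`. -/
theorem clustered_hypergraph_subw {V : Type*} [DecidableEq V] [Fintype V]
    (E : Finset (Finset V))
    (hcov : ∀ v : V, ∃ e ∈ E, v ∈ e)
    (hclust : ∀ u v : V, u ≠ v → ∃ e ∈ E, u ∈ e ∧ v ∈ e) :
    (∀ σ : List (Finset V), IsGenElimOrder σ → σ ≠ [] →
      (elimUs E σ).getD 0 ∅ = (Finset.univ : Finset V) ∧
      ∀ i : ℕ, (elimUs E σ).getD i ∅ ⊆ (elimUs E σ).getD 0 ∅) ∧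
    sSup {x : ℝ | ∃ h : Finset V → ℝ, IsPolymatroid h ∧ (∀ e ∈ E, h e ≤ 1) ∧
        x = sInf {y : ℝ | ∃ σ : List (Finset V), IsGenElimOrder σ ∧
            (∀ X ∈ σ, X.card = 1) ∧ y = ((elimUs E σ).map h).foldr max 0}} =
      fracCoverNumber E := by
  constructor
  · -- part (i)
    intro σ hσ hne
    have hhead : (elimUs E σ).getD 0 ∅ = (Finset.univ : Finset V) := by
      cases σ with
      | nil => exact absurd rfl hne
      | cons X σ' =>
        have hXne : X.Nonempty := hσ.1 X List.mem_cons_self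
        show (elimU E X :: elimUs (elimStep E X) σ').getD 0 ∅ = _
        simpa using elimU_eq_univ E hcov hclust X hXne
    exact ⟨hhead, fun i => by rw [hhead]; exact Finset.subset_univ _⟩
  · -- part (ii)
    have hsingleton : ∀ h : Finset V → ℝ, IsPolymatroid h →
        {y : ℝ | ∃ σ : List (Finset V), IsGenElimOrder σ ∧
            (∀ X ∈ σ, X.card = 1) ∧ y = ((elimUs E σ).map h).foldr max 0}
          = {h Finset.univ} := by
      intro h hp
      ext y
      simp only [Set.mem_setOf_eq, Set.mem_singleton_iff]
      constructor
      · rintro ⟨σ, hσ, _, rfl⟩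
        exact elim_value E hcov hclust h hp σ hσ
      · rintro rfl
        obtain ⟨σ, hσ, hcard⟩ := plain_order_exists (V := V)
        exact ⟨σ, hσ, hcard, (elim_value E hcov hclust h hp σ hσ).symm⟩
    have hSeq : {x : ℝ | ∃ h : Finset V → ℝ, IsPolymatroid h ∧ (∀ e ∈ E, h e ≤ 1) ∧
        x = sInf {y : ℝ | ∃ σ : List (Finset V), IsGenElimOrder σ ∧
            (∀ X ∈ σ, X.card = 1) ∧ y = ((elimUs E σ).map h).foldr max 0}}
        = {x : ℝ | ∃ h : Finset V → ℝ, IsPolymatroid h ∧ (∀ e ∈ E, h e ≤ 1) ∧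
            x = h Finset.univ} := by
      ext x
      simp only [Set.mem_setOf_eq]
      constructor
      · rintro ⟨h, hp, hd, rfl⟩
        exact ⟨h, hp, hd, by rw [hsingleton h hp, csInf_singleton]⟩
      · rintro ⟨h, hp, hd, rfl⟩
        exact ⟨h, hp, hd, by rw [hsingleton h hp, csInf_singleton]⟩
    rw [hSeq]
    have hub : ∀ x ∈ {x : ℝ | ∃ h : Finset V → ℝ, IsPolymatroid h ∧ (∀ e ∈ E, h e ≤ 1) ∧
        x = h Finset.univ}, x ≤ fracCoverNumber E := by
      rintro x ⟨h, hp, hd, rfl⟩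
      exact le_csInf (coverSet_nonempty E hcov)
        (by rintro s ⟨W, hWc, rfl⟩; exact polymatroid_le_cover E h hp hd W hWc)
    have hzero_mem : (0:ℝ) ∈ {x : ℝ | ∃ h : Finset V → ℝ, IsPolymatroid h ∧ (∀ e ∈ E, h e ≤ 1) ∧
        x = h Finset.univ} :=
      ⟨fun _ => 0, ⟨rfl, fun _ => le_refl 0, fun _ _ _ => le_refl 0, fun _ _ => by simp⟩,
        fun _ _ => zero_le_one, rfl⟩
    apply le_antisymm
    · exact csSup_le ⟨0, hzero_mem⟩ hub
    · obtain ⟨y, hy0, hyedge, hyval⟩ := exists_opt_matching E hcov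
      set h : Finset V → ℝ := fun S => ∑ v ∈ S, y v with hh
      have hp : IsPolymatroid h := by
        refine ⟨by simp [hh], fun A => Finset.sum_nonneg fun v _ => hy0 v,
          fun A B hAB => Finset.sum_le_sum_of_subset_of_nonneg hAB (fun v _ _ => hy0 v),
          fun A B => le_of_eq ?_⟩
        simp only [hh]
        exact Finset.sum_union_inter
      have hmem : h Finset.univ ∈ {x : ℝ | ∃ h : Finset V → ℝ, IsPolymatroid h ∧
          (∀ e ∈ E, h e ≤ 1) ∧ x = h Finset.univ} :=
        ⟨h, hp, fun e he => hyedge e he, rfl⟩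
      calc fracCoverNumber E ≤ ∑ v, y v := hyval
      _ = h Finset.univ := by simp [hh]
      _ ≤ sSup _ := le_csSup ⟨fracCoverNumber E, hub⟩ hmem
end
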